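/- In the Euclidean plane ℂ, let O = 0, A = a, and B = b·exp(iπ/5), where a = 2cos(2π/5) and b = 2cos(π/5). Then the unoriented angle ∠OAB at the vertex A (between the rays from A to O and from A to B) equals 7π/10. (Part of Claim 1.1: T is the rational triangle (1,2,7).) -/

import Mathlib

open Real

/-- Claim 1.1 (angle at `A`): in the triangle with vertices `O = 0`, `A = a`,
`B = b·exp(iπ/5)` in `ℂ`, where `a = 2cos(2π/5)` and `b = 2cos(π/5)`, the
unoriented angle `∠OAB` at the vertex `A` equals `7π/10`. -/
theorem claim_1_1_angle_at_A (a b : ℝ)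
    (ha : a = 2 * Real.cos (2 * π / 5)) (hb : b = 2 * Real.cos (π / 5)) :
    EuclideanGeometry.angle (0 : ℂ) (a : ℂ)
      ((b : ℂ) * Complex.exp ((π : ℂ) * Complex.I / 5)) = 7 * π / 10 := by
  have hs : Real.sin (π / 5) > 0 := Real.sin_pos_of_pos_of_lt_pi (by positivity) (by nlinarith [Real.pi_pos])
  have ha0 : a > 0 := by
    rw [ha]
    have := Real.cos_pos_of_mem_Ioo (x := 2 * π / 5) ⟨by nlinarith [Real.pi_pos], by nlinarith [Real.pi_pos]⟩
    linarith
  set c := Real.cos (π / 5) with hc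
  set s := Real.sin (π / 5) with hsdef
  have hexp : Complex.exp ((π : ℂ) * Complex.I / 5) = Complex.ofReal c + Complex.ofReal s * Complex.I := by
    rw [show (π : ℂ) * Complex.I / 5 = (↑(π/5)) * Complex.I by push_cast; ring, Complex.exp_mul_I,
      ← Complex.ofReal_cos, ← Complex.ofReal_sin]
  have hdouble : a = 2 * (2 * c^2 - 1) := by
    rw [ha, show 2 * π / 5 = 2 * (π/5) by ring, Real.cos_two_mul]
  have hs2 : s^2 = 1 - c^2 := by
    have := Real.sin_sq_add_cos_sq (π/5); nlinarith
  have hBA : (b : ℂ) * Complex.exp ((π : ℂ) * Complex.I / 5) - (a : ℂ)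
      = Complex.ofReal (2*s^2) + Complex.ofReal (2*c*s) * Complex.I := by
    rw [hexp, hb, hdouble]
    push_cast
    rw [show ((2:ℂ)*(s:ℂ)^2) = 2*(1 - (c:ℂ)^2) by norm_cast; rw [hs2]]
    ring
  rw [EuclideanGeometry.angle, InnerProductGeometry.angle]
  simp only [vsub_eq_sub]
  rw [show (0:ℂ) - (a:ℂ) = Complex.ofReal (-a) by push_cast; ring, hBA]
  rw [Complex.inner]
  have hnorm1 : ‖(Complex.ofReal (-a) : ℂ)‖ = a := by
    simp [abs_of_nonneg ha0.le]
  have hnorm2 : ‖(Complex.ofReal (2*s^2) + Complex.ofReal (2*c*s) * Complex.I : ℂ)‖ = 2*s := by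
    rw [Complex.norm_add_mul_I,
      show (2*s^2)^2 + (2*c*s)^2 = (2*s)^2 by nlinarith]
    exact Real.sqrt_sq (by positivity)
  have hre : ((starRingEnd ℂ) (Complex.ofReal (-a)) * (Complex.ofReal (2*s^2) + Complex.ofReal (2*c*s) * Complex.I)).re
      = -a * (2*s^2) := by
    rw [Complex.conj_ofReal]
    simp only [Complex.add_re, Complex.mul_re, Complex.ofReal_re, Complex.ofReal_im,
      Complex.I_re, Complex.I_im]
    ring
  rw [mul_comm (_ + _) ((starRingEnd ℂ) _), hre, hnorm1, hnorm2]
  have hne : a * (2*s) ≠ 0 := by positivity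
  have : -a * (2*s^2) / (a * (2*s)) = -s := by
    rw [show -a * (2*s^2) = (-s) * (a * (2*s)) by ring, mul_div_cancel_right₀ _ hne]
  rw [this, show -s = Real.cos (7*π/10) by
    rw [show 7*π/10 = π - (π/2 - π/5) by ring, Real.cos_pi_sub, Real.cos_pi_div_two_sub] ]
  exact Real.arccos_cos (by positivity) (by nlinarith [Real.pi_pos])
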